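/- arXiv:1701.09074 — 2 statements merged into one kernel-verified Lean document; each statement's English description precedes it below -/
import Mathlib

section
/- Let A be an Iwanaga-Gorenstein finite-dimensional algebra. A finitely generated A-module G is Gorenstein projective if and only if there is an exact sequence 0 → G → P^0 → P^1 → ⋯ with each P^i finitely generated projective. -/
open CategoryTheory

/-- A totally acyclic complex of finitely generated projective `A`-modules:
an acyclic complex of finitely generated projectives which remains acyclic
after applying `Hom_A(-, A)`. -/
structure TotallyAcyclicComplex (A : Type) [Ring A] : Type 1 where
  P : ℤ → ModuleCat.{0} A
  fg : ∀ i, Module.Finite A (P i)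
  proj : ∀ i, Module.Projective A (P i)
  d : ∀ i : ℤ, P i ⟶ P (i + 1)
  acyclic : ∀ i : ℤ, LinearMap.range (d i).hom = LinearMap.ker (d (i + 1)).hom
  homAcyclic : ∀ (i : ℤ) (g : P (i + 1) →ₗ[A] A), g.comp (d i).hom = 0 →
      ∃ h : P (i + 1 + 1) →ₗ[A] A, h.comp (d (i + 1)).hom = g

/-- A module is Gorenstein projective if it is a kernel (syzygy) of a differential in a
totally acyclic complex of finitely generated projectives. -/
def IsGorensteinProjective (A : Type) [Ring A] (M : Type) [AddCommGroup M] [Module A M] :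
    Prop :=
  ∃ (C : TotallyAcyclicComplex A) (i : ℤ), Nonempty (M ≃ₗ[A] LinearMap.ker (C.d i).hom)

/-- `HasProjDimLE A n M` means that `M` has projective dimension at most `n`. -/
def HasProjDimLE (A : Type) [Ring A] : ℕ → ∀ (M : Type) [AddCommGroup M] [Module A M], Prop
  | 0 => fun M _ _ => Module.Projective A M
  | n + 1 => fun M _ _ => ∃ (P : Type) (_ : AddCommGroup P) (_ : Module A P),
      Module.Projective A P ∧ ∃ f : P →ₗ[A] M, Function.Surjective f ∧
        HasProjDimLE A n (LinearMap.ker f)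

/-- `HasInjDimLE A n M` means that `M` has injective dimension at most `n`. -/
def HasInjDimLE (A : Type) [Ring A] : ℕ → ∀ (M : Type) [AddCommGroup M] [Module A M], Prop
  | 0 => fun M _ _ => Module.Injective A M
  | n + 1 => fun M _ _ => ∃ (I : Type) (_ : AddCommGroup I) (_ : Module A I),
      Module.Injective A I ∧ ∃ f : M →ₗ[A] I, Function.Injective f ∧
        HasInjDimLE A n (I ⧸ LinearMap.range f)

/-- An algebra is Iwanaga-Gorenstein if it has finite self-injective dimension
on both sides (right modules being modules over `Aᵐᵒᵖ`). -/
def IwanagaGorenstein (A : Type) [Ring A] : Prop :=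
  (∃ n, HasInjDimLE A n A) ∧ (∃ n, HasInjDimLE Aᵐᵒᵖ n Aᵐᵒᵖ)

/-! ### Auxiliary material -/

namespace GPaux

open LinearMap

variable {A : Type} [Ring A]

section HomExact

variable (P : ℤ → ModuleCat.{0} A) (d : ∀ i : ℤ, P i →ₗ[A] P (i + 1))

/-- `Hom(-, N)` of an acyclic complex of modules is exact whenever `N` is injective. -/
lemma homExact_injective (hac : ∀ i : ℤ, range (d i) = ker (d (i + 1)))
    (N : Type) [AddCommGroup N] [Module A N] (hN : Module.Injective A N)
    (i : ℤ) (g : P (i + 1) →ₗ[A] N) (hg : g.comp (d i) = 0) :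
    ∃ h : P (i + 1 + 1) →ₗ[A] N, h.comp (d (i + 1)) = g := by
  have hker : ker (d (i + 1)) ≤ ker g := by
    rw [← hac i]
    rintro x ⟨y, rfl⟩
    simpa using LinearMap.congr_fun hg y
  let q : (P (i+1) ⧸ ker (d (i+1))) →ₗ[A] N := Submodule.liftQ _ g hker
  let D : (P (i+1) ⧸ ker (d (i+1))) →ₗ[A] P (i+1+1) :=
    Submodule.liftQ _ (d (i+1)) le_rfl
  have hD : Function.Injective D :=
    LinearMap.ker_eq_bot.1 (Submodule.ker_liftQ_eq_bot _ _ _ le_rfl)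
  obtain ⟨h, hh⟩ := hN.out D hD q
  refine ⟨h, LinearMap.ext fun x => ?_⟩
  have e1 : D (Submodule.Quotient.mk x) = (d (i+1)) x := rfl
  have e2 : q (Submodule.Quotient.mk x) = g x := rfl
  calc h ((d (i+1)) x) = h (D (Submodule.Quotient.mk x)) := by rw [e1]
    _ = q (Submodule.Quotient.mk x) := hh _
    _ = g x := e2

/-- `Hom(-, N)` of an acyclic complex of projective modules is exact
whenever `N` has finite injective dimension. -/
lemma homExact_of_injDim (hproj : ∀ i : ℤ, Module.Projective A (P i))
    (hac : ∀ i : ℤ, range (d i) = ker (d (i + 1))) :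
    ∀ (n : ℕ) (N : Type) (_ : AddCommGroup N) (_ : Module A N), HasInjDimLE A n N →
      ∀ (i : ℤ) (g : P (i + 1) →ₗ[A] N), g.comp (d i) = 0 →
        ∃ h : P (i + 1 + 1) →ₗ[A] N, h.comp (d (i + 1)) = g := by
  intro n
  induction n with
  | zero =>
    intro N _ _ hN i g hg
    exact homExact_injective P d hac N hN i g hg
  | succ n IH =>
    intro N _ _ hN i g hg
    obtain ⟨I, _, _, hI, f, hf, hQ⟩ := hN
    have hdd : ∀ (j : ℤ) (x : P j), (d (j+1)) ((d j) x) = 0 := by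
      intro j x
      have : (d j) x ∈ ker (d (j+1)) := (hac j) ▸ ⟨x, rfl⟩
      exact this
    obtain ⟨h₁, hh₁⟩ := homExact_injective P d hac I hI i (f.comp g)
      (by rw [LinearMap.comp_assoc, hg, LinearMap.comp_zero])
    set π : I →ₗ[A] (I ⧸ range f) := Submodule.mkQ (range f) with hπdef
    have hπf : π.comp f = 0 := by
      ext x; simp [π, Submodule.Quotient.mk_eq_zero]
    obtain ⟨h₂, hh₂⟩ := IH _ _ _ hQ (i+1) (π.comp h₁)
      (by rw [LinearMap.comp_assoc, hh₁, ← LinearMap.comp_assoc, hπf, LinearMap.zero_comp])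
    haveI := hproj (i+1+1+1)
    obtain ⟨h₃, hh₃⟩ := Module.projective_lifting_property π h₂ (Submodule.mkQ_surjective _)
    set u : P (i+1+1) →ₗ[A] I := h₁ - h₃.comp (d (i+1+1)) with hudef
    have hu : ∀ x, u x ∈ range f := by
      intro x
      have hπu : π (u x) = 0 := by
        have e1 : π (h₁ x) = h₂ ((d (i+1+1)) x) := (LinearMap.congr_fun hh₂ x).symm
        have e2 : π (h₃ ((d (i+1+1)) x)) = h₂ ((d (i+1+1)) x) :=
          LinearMap.congr_fun hh₃ ((d (i+1+1)) x)
        simp [u, e1, e2]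
      rwa [← Submodule.Quotient.mk_eq_zero]
    let eqv := LinearEquiv.ofInjective f hf
    set h : P (i+1+1) →ₗ[A] N := eqv.symm.toLinearMap.comp (u.codRestrict (range f) hu)
      with hhdef
    have hfh : ∀ x, f (h x) = u x := by
      intro x
      have : f (eqv.symm ⟨u x, hu x⟩) = ((eqv (eqv.symm ⟨u x, hu x⟩)) : I) := by
        rw [LinearEquiv.ofInjective_apply]
      show f (eqv.symm ⟨u x, hu x⟩) = u x
      simpa [h, LinearEquiv.apply_symm_apply] using this
    refine ⟨h, LinearMap.ext fun x => hf ?_⟩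
    show f (h ((d (i+1)) x)) = f (g x)
    rw [hfh]
    have : u ((d (i+1)) x) = h₁ ((d (i+1)) x) - h₃ ((d (i+1+1)) ((d (i+1)) x)) := rfl
    rw [this, hdd (i+1) x, map_zero, sub_zero]
    exact LinearMap.congr_fun hh₁ x

end HomExact

section Pcast

/-- Transport of modules in a `ℤ`-indexed family along an equality of indices. -/
def pcast (P : ℤ → ModuleCat.{0} A) {a b : ℤ} (h : a = b) : P a ≃ₗ[A] P b :=
  h ▸ LinearEquiv.refl A (P a)

lemma pcast_ker (P : ℤ → ModuleCat.{0} A) (d : ∀ i : ℤ, P i ⟶ P (i + 1))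
    {a b : ℤ} (h : a = b) :
    Submodule.map (pcast P h).toLinearMap (LinearMap.ker (d a).hom) = LinearMap.ker (d b).hom := by
  subst h
  show Submodule.map (LinearEquiv.refl A (P a)).toLinearMap _ = _
  simp

lemma ker_pcast_comp (P : ℤ → ModuleCat.{0} A) {a b : ℤ} (h : a = b)
    {M : Type} [AddCommGroup M] [Module A M] (f : M →ₗ[A] P a) :
    LinearMap.ker ((pcast P h).toLinearMap.comp f) = LinearMap.ker f := by
  rw [LinearMap.ker_comp, LinearEquiv.ker, Submodule.comap_bot]

end Pcast

section Cover

variable (A)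

/-- A bundled finitely generated module. -/
structure FGBundle : Type 1 where
  M : Type
  [acg : AddCommGroup M]
  [mod : Module A M]
  [fin : Module.Finite A M]

attribute [instance] FGBundle.acg FGBundle.mod FGBundle.fin

variable (M : Type) [AddCommGroup M] [Module A M] [Module.Finite A M]

/-- The number of generators in a chosen finite free cover of `M`. -/
noncomputable def covN : ℕ := (Module.Finite.exists_fin' A M).choose

/-- A chosen surjection onto `M` from a finite free module. -/
noncomputable def covMap : (Fin (covN A M) → A) →ₗ[A] M :=
  (Module.Finite.exists_fin' A M).choose_spec.choose

lemma covMap_surj : Function.Surjective (covMap A M) :=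
  (Module.Finite.exists_fin' A M).choose_spec.choose_spec

omit [Module.Finite A M] in
lemma ker_fin [IsNoetherian A A] (k : ℕ) (f : (Fin k → A) →ₗ[A] M) :
    Module.Finite A (LinearMap.ker f) :=
  Module.Finite.iff_fg.2 (IsNoetherian.noetherian _)

variable [IsNoetherian A A]

/-- The chain of syzygies of `G₀` with respect to the chosen free covers. -/
noncomputable def chain (G₀ : FGBundle A) : ℕ → FGBundle A
  | 0 => G₀
  | n + 1 =>
    { M := LinearMap.ker (covMap A (chain G₀ n).M)
      fin := ker_fin A _ _ _ }

end Cover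

section Glue

open LinearMap

variable [IsNoetherian A A]
variable (G₀ : FGBundle A) (P : ℕ → ModuleCat.{0} A)

/-- Glue a chosen free resolution of `G₀` to the coresolution `P`. -/
noncomputable def bigP : ℤ → ModuleCat.{0} A
  | .ofNat n => P n
  | .negSucc n => ModuleCat.of A (Fin (covN A (chain A G₀ n).M) → A)

variable (d : ∀ n : ℕ, P n ⟶ P (n + 1)) (ι : G₀.M →ₗ[A] P 0)

/-- The differentials of the glued complex. -/
noncomputable def bigD : ∀ i : ℤ, bigP G₀ P i ⟶ bigP G₀ P (i + 1)
  | .ofNat n => d n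
  | .negSucc 0 => ModuleCat.ofHom (ι.comp (covMap A G₀.M))
  | .negSucc (n + 1) =>
      ModuleCat.ofHom ((Submodule.subtype (ker (covMap A (chain A G₀ n).M))).comp
        (covMap A (chain A G₀ (n + 1)).M))

lemma bigP_fg (hfg : ∀ n, Module.Finite A (P n)) : ∀ i, Module.Finite A (bigP G₀ P i)
  | .ofNat n => hfg n
  | .negSucc _ => inferInstanceAs (Module.Finite A (Fin _ → A))

lemma bigP_proj (hproj : ∀ n, Module.Projective A (P n)) :
    ∀ i, Module.Projective A (bigP G₀ P i)
  | .ofNat n => hproj n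
  | .negSucc _ => inferInstanceAs (Module.Projective A (Fin _ → A))

lemma bigD_acyclic (hι : Function.Injective ι)
    (h0 : range ι = ker (d 0).hom)
    (hn : ∀ n, range (d n).hom = ker (d (n + 1)).hom) :
    ∀ i : ℤ, range (bigD G₀ P d ι i).hom = ker (bigD G₀ P d ι (i + 1)).hom := by
  intro i
  match i with
  | .ofNat n => exact hn n
  | .negSucc 0 =>
    show range (ι.comp (covMap A G₀.M)) = ker (d 0).hom
    rw [range_comp, range_eq_top.2 (covMap_surj A G₀.M), Submodule.map_top, h0]
  | .negSucc 1 =>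
    show range ((Submodule.subtype (ker (covMap A (chain A G₀ 0).M))).comp
        (covMap A (chain A G₀ 1).M)) = ker (ι.comp (covMap A G₀.M))
    erw [range_comp, range_eq_top.2 (covMap_surj A ((chain A G₀ 1).M)), Submodule.map_top,
      Submodule.range_subtype, ker_comp, ker_eq_bot.2 hι, Submodule.comap_bot]
    rfl
  | .negSucc (n + 2) =>
    show range ((Submodule.subtype (ker (covMap A (chain A G₀ (n+1)).M))).comp
        (covMap A (chain A G₀ (n + 2)).M)) =
      ker ((Submodule.subtype (ker (covMap A (chain A G₀ n).M))).comp
        (covMap A (chain A G₀ (n + 1)).M))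
    erw [range_comp, range_eq_top.2 (covMap_surj A ((chain A G₀ (n+2)).M)), Submodule.map_top,
      Submodule.range_subtype, ker_comp, ker_eq_bot.2 (Submodule.injective_subtype _),
      Submodule.comap_bot]
    rfl

end Glue

end GPaux

/-- Over an Iwanaga-Gorenstein finite-dimensional algebra `A`, a finitely generated module `G`
is Gorenstein projective if and only if there is an exact sequence
`0 → G → P^0 → P^1 → ⋯` with each `P^i` finitely generated projective. -/
theorem gorensteinProjective_iff_exists_right_resolution
    (K : Type) [Field K] (A : Type) [Ring A] [Algebra K A] [FiniteDimensional K A]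
    (hA : IwanagaGorenstein A)
    (G : Type) [AddCommGroup G] [Module A G] [Module.Finite A G] :
    IsGorensteinProjective A G ↔
      ∃ (P : ℕ → ModuleCat.{0} A) (_ : ∀ n, Module.Finite A (P n))
        (_ : ∀ n, Module.Projective A (P n))
        (d : ∀ n : ℕ, P n ⟶ P (n + 1)) (ι : G →ₗ[A] P 0),
        Function.Injective ι ∧ LinearMap.range ι = LinearMap.ker (d 0).hom ∧
          ∀ n, LinearMap.range (d n).hom = LinearMap.ker (d (n + 1)).hom := by
  classical
  constructor
  · -- forward direction: reindex the totally acyclic complex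
    rintro ⟨C, i, ⟨e⟩⟩
    have hj : ∀ n : ℕ, (i + (n : ℤ)) + 1 = i + ((n + 1 : ℕ) : ℤ) := by
      intro n; push_cast; ring
    have h0 : i = i + ((0 : ℕ) : ℤ) := by simp
    refine ⟨fun n => C.P (i + (n : ℤ)), fun n => C.fg _, fun n => C.proj _,
      fun n => ModuleCat.ofHom ((GPaux.pcast C.P (hj n)).toLinearMap.comp (C.d (i + (n : ℤ))).hom),
      (GPaux.pcast C.P h0).toLinearMap.comp
        ((LinearMap.ker (C.d i).hom).subtype.comp e.toLinearMap), ?_, ?_, ?_⟩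
    · simp only [LinearMap.coe_comp]
      exact (GPaux.pcast C.P h0).injective.comp
        ((Submodule.injective_subtype _).comp e.injective)
    · simp only [ModuleCat.hom_ofHom]
      rw [LinearMap.range_comp, LinearMap.range_comp, LinearEquiv.range, Submodule.map_top,
        Submodule.range_subtype, GPaux.pcast_ker C.P C.d h0, GPaux.ker_pcast_comp]
    · intro n
      simp only [ModuleCat.hom_ofHom]
      rw [LinearMap.range_comp, C.acyclic (i + (n : ℤ)),
        GPaux.pcast_ker C.P C.d (hj n), GPaux.ker_pcast_comp]
  · -- backward direction: glue a free resolution onto the coresolution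
    rintro ⟨P, hfg, hproj, d, ι, hι, h0, hn⟩
    obtain ⟨m, hm⟩ := hA.1
    haveI : IsNoetherian K A := IsNoetherian.iff_fg.2 inferInstance
    haveI : IsNoetherian A A := isNoetherian_of_tower K inferInstance
    let G₀ : GPaux.FGBundle A := ⟨G⟩
    let C : TotallyAcyclicComplex A :=
      { P := GPaux.bigP G₀ P
        fg := GPaux.bigP_fg G₀ P hfg
        proj := GPaux.bigP_proj G₀ P hproj
        d := GPaux.bigD G₀ P d ι
        acyclic := GPaux.bigD_acyclic G₀ P d ι hι h0 hn
        homAcyclic := fun i g hg =>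
          GPaux.homExact_of_injDim (GPaux.bigP G₀ P) (fun i => (GPaux.bigD G₀ P d ι i).hom)
            (GPaux.bigP_proj G₀ P hproj) (GPaux.bigD_acyclic G₀ P d ι hι h0 hn)
            m A inferInstance inferInstance hm i g hg }
    refine ⟨C, 0, ⟨?_⟩⟩
    exact (LinearEquiv.ofInjective ι hι).trans (LinearEquiv.ofEq _ _ h0)
end

section
/- Let A be an Iwanaga-Gorenstein finite-dimensional algebra and P• an exact sequence of finitely generated projective left A-modules. Then Hom_A(P•, A) is an exact sequence of projective right A-modules. -/
open CategoryTheory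

theorem dualProjective (A : Type) [Ring A] (P : Type) [AddCommGroup P] [Module A P]
    (hfg : Module.Finite A P) (hproj : Module.Projective A P) :
    Module.Projective Aᵐᵒᵖ (P →ₗ[A] A) := by
  obtain ⟨n, π, hπ⟩ := Module.Finite.exists_fin' A P
  obtain ⟨s, hs⟩ := Module.projective_lifting_property π LinearMap.id hπ
  have hsx : ∀ x : P, π (s x) = x := fun x => LinearMap.congr_fun hs x
  -- e : free → dual
  let e : (Fin n → Aᵐᵒᵖ) →ₗ[Aᵐᵒᵖ] (P →ₗ[A] A) :=
    { toFun := fun a =>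
        ∑ j, (LinearMap.toSpanSingleton A A (a j).unop) ∘ₗ ((LinearMap.proj j) ∘ₗ s)
      map_add' := by
        intro a b
        ext x
        simp [LinearMap.toSpanSingleton, smul_eq_mul, mul_add, Finset.sum_add_distrib]
      map_smul' := by
        intro c a
        ext x
        simp only [LinearMap.sum_apply, LinearMap.coe_comp, Function.comp_apply,
          LinearMap.toSpanSingleton_apply, LinearMap.proj_apply, Pi.smul_apply,
          RingHom.id_apply, LinearMap.smul_apply, smul_eq_mul, MulOpposite.smul_eq_mul_unop,
          MulOpposite.unop_mul, Finset.sum_mul, mul_assoc] }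
  let r : (P →ₗ[A] A) →ₗ[Aᵐᵒᵖ] (Fin n → Aᵐᵒᵖ) :=
    { toFun := fun g j => MulOpposite.op (g (π (Pi.single j 1)))
      map_add' := by intro g h; ext j; simp
      map_smul' := by
        intro c g
        ext j
        simp [MulOpposite.smul_eq_mul_unop] }
  refine Module.Projective.of_split r e ?_
  apply LinearMap.ext; intro g; apply LinearMap.ext; intro x
  have : ∀ j : Fin n, (s x j) • g (π (Pi.single j 1)) = g (π (Pi.single j (s x j))) := by
    intro j
    have hsingle : (s x j) • (Pi.single j (1 : A) : Fin n → A) = Pi.single j (s x j) := by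
      funext k
      by_cases h : k = j <;> simp [Pi.single_apply, h]
    rw [← map_smul g, ← map_smul π, hsingle]
  simp only [LinearMap.comp_apply, LinearMap.id_apply, e, r, LinearMap.coe_mk, AddHom.coe_mk,
    LinearMap.sum_apply, LinearMap.coe_comp, Function.comp_apply,
    LinearMap.toSpanSingleton_apply, LinearMap.proj_apply, MulOpposite.unop_op]
  rw [Finset.sum_congr rfl fun j _ => this j, ← map_sum g, ← map_sum π]
  rw [Finset.univ_sum_single (s x), hsx]

/-- Factor a linear map `g` through (a submodule equal to) the range of `f`, when
`ker f ≤ ker g`. -/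
noncomputable def factorThru {A M M' N : Type} [Ring A] [AddCommGroup M] [Module A M]
    [AddCommGroup M'] [Module A M'] [AddCommGroup N] [Module A N]
    (f : M →ₗ[A] M') (g : M →ₗ[A] N) (S : Submodule A M') (hS : LinearMap.range f = S)
    (h : LinearMap.ker f ≤ LinearMap.ker g) : S →ₗ[A] N :=
  ((LinearMap.ker f).liftQ g h) ∘ₗ (f.quotKerEquivRange.symm.toLinearMap) ∘ₗ
    (LinearEquiv.ofEq S (LinearMap.range f) hS.symm).toLinearMap

theorem factorThru_apply {A M M' N : Type} [Ring A] [AddCommGroup M] [Module A M]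
    [AddCommGroup M'] [Module A M'] [AddCommGroup N] [Module A N]
    (f : M →ₗ[A] M') (g : M →ₗ[A] N) (S : Submodule A M') (hS : LinearMap.range f = S)
    (h : LinearMap.ker f ≤ LinearMap.ker g) (x : M) (hx : f x ∈ S) :
    factorThru f g S hS h ⟨f x, hx⟩ = g x := by
  unfold factorThru
  simp only [LinearMap.comp_apply, LinearEquiv.coe_toLinearMap]
  have h1 : (LinearEquiv.ofEq S (LinearMap.range f) hS.symm) ⟨f x, hx⟩
      = ⟨f x, LinearMap.mem_range_self f x⟩ := rfl
  have h2 : f.quotKerEquivRange.symm ⟨f x, LinearMap.mem_range_self f x⟩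
      = Submodule.Quotient.mk x := by
    rw [LinearEquiv.symm_apply_eq]
    exact Subtype.ext (f.quotKerEquivRange_apply_mk x).symm
  rw [h1, h2, Submodule.liftQ_apply]

theorem keyExtend (A : Type) [Ring A]
    (P : ℤ → ModuleCat.{0} A)
    (proj : ∀ i, Module.Projective A (P i))
    (d : ∀ i : ℤ, P i ⟶ P (i + 1))
    (acyclic : ∀ i : ℤ, LinearMap.range (d i).hom = LinearMap.ker (d (i + 1)).hom) :
    ∀ (n : ℕ) (N : Type) (_ : AddCommGroup N) (_ : Module A N), HasInjDimLE A n N →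
      ∀ (j : ℤ) (φ : LinearMap.ker (d j).hom →ₗ[A] N),
        ∃ ψ : (P j : Type) →ₗ[A] N, ψ ∘ₗ (LinearMap.ker (d j).hom).subtype = φ := by
  intro n
  induction n with
  | zero =>
    intro N _ _ hN j φ
    obtain ⟨ψ, hψ⟩ := hN.out (LinearMap.ker (d j).hom).subtype
      (Submodule.injective_subtype _) φ
    exact ⟨ψ, LinearMap.ext hψ⟩
  | succ n ih =>
    intro N _ _ hN j φ
    obtain ⟨I, _, _, hI, f, hf, hQ⟩ := hN
    obtain ⟨ψ₀, hψ₀⟩ := hI.out (LinearMap.ker (d j).hom).subtype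
      (Submodule.injective_subtype _) (f ∘ₗ φ)
    set θ : (P j : Type) →ₗ[A] (I ⧸ LinearMap.range f) := (LinearMap.range f).mkQ ∘ₗ ψ₀
      with hθdef
    have hθker : LinearMap.ker (d j).hom ≤ LinearMap.ker θ := by
      intro x hx
      have h1 : ψ₀ x = f (φ ⟨x, hx⟩) := hψ₀ ⟨x, hx⟩
      simp only [LinearMap.mem_ker, hθdef, LinearMap.comp_apply, h1,
        Submodule.mkQ_apply, Submodule.Quotient.mk_eq_zero]
      exact LinearMap.mem_range_self f _
    set φ' := factorThru (d j).hom θ (LinearMap.ker (d (j + 1)).hom) (acyclic j) hθker with hφ'def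
    obtain ⟨η, hη⟩ := ih (I ⧸ LinearMap.range f) _ _ hQ (j + 1) φ'
    haveI := proj (j + 1)
    obtain ⟨η', hη'⟩ := Module.projective_lifting_property (LinearMap.range f).mkQ η
      (Submodule.mkQ_surjective _)
    set ψ' : (P j : Type) →ₗ[A] I := ψ₀ - η' ∘ₗ (d j).hom with hψ'def
    have hmem : ∀ x : (P j : Type), ψ' x ∈ LinearMap.range f := by
      intro x
      have hdx : (d j).hom x ∈ LinearMap.ker (d (j + 1)).hom := acyclic j ▸ LinearMap.mem_range_self _ x
      have e1 : η (d j x) = φ' ⟨(d j).hom x, hdx⟩ := by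
        have := LinearMap.congr_fun hη ⟨(d j).hom x, hdx⟩
        simpa using this
      have e2 : φ' ⟨(d j).hom x, hdx⟩ = θ x := factorThru_apply _ _ _ _ _ x hdx
      have : (LinearMap.range f).mkQ (ψ' x) = 0 := by
        have e3 : (LinearMap.range f).mkQ (η' (d j x)) = η (d j x) :=
          LinearMap.congr_fun hη' (d j x)
        simp only [hψ'def, map_sub, LinearMap.sub_apply, LinearMap.comp_apply, e3, e1, e2,
          hθdef, sub_self]
      rwa [Submodule.mkQ_apply, Submodule.Quotient.mk_eq_zero] at this
    refine ⟨(LinearEquiv.ofInjective f hf).symm.toLinearMap ∘ₗ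
      ψ'.codRestrict (LinearMap.range f) hmem, ?_⟩
    apply LinearMap.ext
    rintro ⟨x, hx⟩
    have hζ : ψ' x = f (φ ⟨x, hx⟩) := by
      have hd0 : (d j).hom x = 0 := hx
      simp only [hψ'def, LinearMap.sub_apply, LinearMap.comp_apply, hd0, map_zero, sub_zero]
      exact hψ₀ ⟨x, hx⟩
    simp only [LinearMap.comp_apply, Submodule.subtype_apply, LinearEquiv.coe_toLinearMap,
      LinearMap.codRestrict_apply]
    rw [LinearEquiv.symm_apply_eq]
    exact Subtype.ext (by simp [hζ, LinearEquiv.ofInjective_apply])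



/-- Let `A` be an Iwanaga-Gorenstein finite-dimensional algebra and `P•` an exact sequence of
finitely generated projective left `A`-modules.  Then `Hom_A(P•, A)` is an exact sequence of
projective right `A`-modules (right modules are modules over `Aᵐᵒᵖ`; the dual complex has
differentials given by precomposition). -/
theorem homDual_of_exact_complex_of_projectives_is_exact_of_projectives
    (K : Type) [Field K] (A : Type) [Ring A] [Algebra K A] [FiniteDimensional K A]
    (hA : IwanagaGorenstein A)
    (P : ℤ → ModuleCat.{0} A) (fg : ∀ i, Module.Finite A (P i))
    (proj : ∀ i, Module.Projective A (P i))
    (d : ∀ i : ℤ, P i ⟶ P (i + 1))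
    (acyclic : ∀ i : ℤ, LinearMap.range (d i).hom = LinearMap.ker (d (i + 1)).hom) :
    (∀ i : ℤ, Module.Projective Aᵐᵒᵖ ((P i : Type) →ₗ[A] A)) ∧
      (∀ (i : ℤ) (g : (P (i + 1) : Type) →ₗ[A] A),
        g.comp (d i).hom = 0 ↔ ∃ h : (P (i + 1 + 1) : Type) →ₗ[A] A, h.comp (d (i + 1)).hom = g) := by
  obtain ⟨⟨n, hn⟩, -⟩ := hA
  constructor
  · intro i
    exact dualProjective A (P i) (fg i) (proj i)
  · intro i g
    constructor
    · intro hg0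
      have hker : LinearMap.ker (d (i + 1)).hom ≤ LinearMap.ker g := by
        rw [← acyclic i]
        rintro y ⟨x, rfl⟩
        exact LinearMap.congr_fun hg0 x
      set gbar := factorThru (d (i + 1)).hom g (LinearMap.ker (d (i + 1 + 1)).hom) (acyclic (i + 1)) hker
        with hgbardef
      obtain ⟨h, hh⟩ := keyExtend A P proj d acyclic n A _ _ hn (i + 1 + 1) gbar
      refine ⟨h, ?_⟩
      apply LinearMap.ext
      intro x
      have hdx : (d (i + 1)).hom x ∈ LinearMap.ker (d (i + 1 + 1)).hom :=
        acyclic (i + 1) ▸ LinearMap.mem_range_self _ x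
      have e1 : h (d (i + 1) x) = gbar ⟨(d (i + 1)).hom x, hdx⟩ := by
        have := LinearMap.congr_fun hh ⟨(d (i + 1)).hom x, hdx⟩
        simpa using this
      have e2 : gbar ⟨(d (i + 1)).hom x, hdx⟩ = g x := factorThru_apply _ _ _ _ _ x hdx
      simpa [LinearMap.comp_apply] using e1.trans e2
    · rintro ⟨h, rfl⟩
      apply LinearMap.ext
      intro x
      have hdx : (d i).hom x ∈ LinearMap.ker (d (i + 1)).hom :=
        acyclic i ▸ LinearMap.mem_range_self _ x
      simp only [LinearMap.comp_apply, LinearMap.zero_apply]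
      rw [show (d (i + 1)).hom ((d i).hom x) = 0 from hdx, map_zero]
end
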